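/- arXiv:1105.1188 — 7 statements merged into one kernel-verified Lean document; each statement's English description precedes it below -/
import Mathlib

section
/- Let A be an (n+1)×(n+1) integer matrix that is d-stochastic (every column sums to d) and whose restriction to the sublattice Λ₀ of ℤ^{n+1} consisting of vectors with coordinate sum zero is a lattice automorphism (i.e., A maps Λ₀ bijectively onto Λ₀). Then det(A) = d or det(A) = -d. -/
open Matrix Finset

namespace Stmt0Aux

/-- Change of coordinates: identity except last row is all ones. -/
def Qm (n : ℕ) : Matrix (Fin (n+1)) (Fin (n+1)) ℤ :=
  fun i j => if i = Fin.last n then 1 else if i = j then 1 else 0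

/-- Inverse of `Qm`. -/
def Qi (n : ℕ) : Matrix (Fin (n+1)) (Fin (n+1)) ℤ :=
  fun i j => if i = Fin.last n then (if j = Fin.last n then 1 else -1)
             else if i = j then 1 else 0

lemma cs_ne_last {n : ℕ} (k : Fin n) : k.castSucc ≠ Fin.last n :=
  (Fin.castSucc_lt_last k).ne

lemma col_sum_Qi (n : ℕ) (j : Fin (n+1)) :
    ∑ k, Qi n k j = if j = Fin.last n then 1 else 0 := by
  rw [Fin.sum_univ_castSucc]
  have h1 : ∀ k : Fin n, Qi n k.castSucc j = if k.castSucc = j then 1 else 0 :=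
    fun k => if_neg (cs_ne_last k)
  have h2 : Qi n (Fin.last n) j = if j = Fin.last n then 1 else -1 := if_pos rfl
  rw [Finset.sum_congr rfl (fun k _ => h1 k), h2]
  by_cases hj : j = Fin.last n
  · subst hj
    rw [Finset.sum_congr rfl (fun k _ => if_neg (cs_ne_last k))]
    simp
  · obtain ⟨j', rfl⟩ := Fin.exists_castSucc_eq.mpr hj
    rw [if_neg hj, if_neg hj]
    simp only [Fin.castSucc_inj]
    rw [Finset.sum_ite_eq' Finset.univ j' (fun _ => (1:ℤ))]
    simp

lemma Qm_mul_Qi (n : ℕ) : Qm n * Qi n = 1 := by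
  ext i j
  rw [mul_apply]
  by_cases hi : i = Fin.last n
  · subst hi
    have h1 : ∀ k, Qm n (Fin.last n) k * Qi n k j = Qi n k j := by
      intro k; rw [show Qm n (Fin.last n) k = 1 from if_pos rfl, one_mul]
    rw [Finset.sum_congr rfl (fun k _ => h1 k), col_sum_Qi]
    simp [one_apply, eq_comm]
  · have h1 : ∀ k, Qm n i k * Qi n k j = if k = i then Qi n i j else 0 := by
      intro k
      rw [show Qm n i k = if i = k then 1 else 0 from if_neg hi]
      by_cases h : k = i
      · subst h; simp
      · rw [if_neg (fun h' => h h'.symm), if_neg h, zero_mul]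
    rw [Finset.sum_congr rfl (fun k _ => h1 k),
      Finset.sum_ite_eq' Finset.univ i (fun _ => Qi n i j)]
    simp only [Finset.mem_univ, if_true]
    rw [show Qi n i j = if i = j then 1 else 0 from if_neg hi]
    simp [one_apply]

lemma Qi_mul_Qm (n : ℕ) : Qi n * Qm n = 1 := by
  exact mul_eq_one_comm.mp (Qm_mul_Qi n)

lemma Qm_mulVec_last (n : ℕ) (v : Fin (n+1) → ℤ) :
    (Qm n).mulVec v (Fin.last n) = ∑ i, v i := by
  simp only [mulVec, dotProduct]
  refine Finset.sum_congr rfl fun k _ => ?_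
  rw [show Qm n (Fin.last n) k = 1 from if_pos rfl, one_mul]

lemma Qm_mulVec_castSucc (n : ℕ) (v : Fin (n+1) → ℤ) (i : Fin n) :
    (Qm n).mulVec v i.castSucc = v i.castSucc := by
  simp only [mulVec, dotProduct]
  rw [Finset.sum_congr rfl (fun k (_ : k ∈ univ) => by
    rw [show Qm n i.castSucc k = if i.castSucc = k then 1 else 0 from if_neg (cs_ne_last i)]
    by_cases h : k = i.castSucc
    · subst h; simp
    · rw [if_neg (fun h' => h h'.symm), if_neg h, zero_mul] :
    ∀ k ∈ univ, Qm n i.castSucc k * v k = if k = i.castSucc then v i.castSucc else 0)]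
  rw [Finset.sum_ite_eq' Finset.univ i.castSucc]
  simp

end Stmt0Aux

open Stmt0Aux in
/-- A d-stochastic (n+1)×(n+1) integer matrix whose restriction to the
lattice Λ₀ = {v : Σ vᵢ = 0} is an automorphism has determinant d or -d. -/
theorem stmt0 (n : ℕ) (hn : 1 ≤ n) (d : ℤ)
    (A : Matrix (Fin (n + 1)) (Fin (n + 1)) ℤ)
    (hstoch : ∀ j, ∑ i, A i j = d)
    (hauto : Set.BijOn A.mulVec {v | ∑ i, v i = 0} {v | ∑ i, v i = 0}) :
    A.det = d ∨ A.det = -d := by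
  classical
  set B : Matrix (Fin (n+1)) (Fin (n+1)) ℤ := Qm n * A * Qi n with hB
  set C : Matrix (Fin n) (Fin n) ℤ := B.submatrix Fin.castSucc Fin.castSucc with hC
  -- commuting: B ∘ Qm = Qm ∘ A on vectors
  have hBQ : B * Qm n = Qm n * A := by rw [hB, mul_assoc, Qi_mul_Qm, mul_one]
  have hcomm : ∀ v, B.mulVec ((Qm n).mulVec v) = (Qm n).mulVec (A.mulVec v) := fun v => by
    rw [mulVec_mulVec, hBQ, ← mulVec_mulVec]
  have hQmQi : ∀ y, (Qm n).mulVec ((Qi n).mulVec y) = y := fun y => by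
    rw [mulVec_mulVec, Qm_mul_Qi, one_mulVec]
  -- last row of B
  have hBlast : ∀ j, B (Fin.last n) j = if j = Fin.last n then d else 0 := by
    intro j
    rw [hB, mul_assoc, mul_apply]
    have h1 : ∀ k, Qm n (Fin.last n) k * (A * Qi n) k j = (A * Qi n) k j := fun k => by
      rw [show Qm n (Fin.last n) k = 1 from if_pos rfl, one_mul]
    rw [Finset.sum_congr rfl (fun k _ => h1 k)]
    have h2 : ∑ k, (A * Qi n) k j = ∑ m, (∑ k, A k m) * Qi n m j := by
      simp only [mul_apply]
      rw [Finset.sum_comm]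
      exact Finset.sum_congr rfl fun m _ => (Finset.sum_mul _ _ _).symm
    have h3 : ∀ m, (∑ k, A k m) * Qi n m j = d * Qi n m j := fun m => by rw [hstoch m]
    rw [h2, Finset.sum_congr rfl (fun m _ => h3 m), ← Finset.mul_sum, col_sum_Qi]
    by_cases hj : j = Fin.last n <;> simp [hj]
  -- action of B on vectors with last coordinate 0
  have htop : ∀ (x : Fin (n+1) → ℤ), x (Fin.last n) = 0 →
      ∀ i : Fin n, B.mulVec x i.castSucc = C.mulVec (fun k => x k.castSucc) i := by
    intro x hx i
    simp only [mulVec, dotProduct, hC, submatrix_apply]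
    rw [Fin.sum_univ_castSucc, hx, mul_zero, add_zero]
  -- surjectivity of C.mulVec
  have hsurj : ∀ u : Fin n → ℤ, ∃ w, C.mulVec w = u := by
    intro u
    set y : Fin (n+1) → ℤ := Fin.snoc u 0 with hy
    set t : Fin (n+1) → ℤ := (Qi n).mulVec y with ht
    have hty : (Qm n).mulVec t = y := hQmQi y
    have htΛ : ∑ i, t i = 0 := by
      rw [← Qm_mulVec_last n t, hty, hy, Fin.snoc_last]
    obtain ⟨v, hvΛ, hv⟩ := hauto.surjOn (a := t) htΛ
    set x : Fin (n+1) → ℤ := (Qm n).mulVec v with hx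
    have hxlast : x (Fin.last n) = 0 := by
      rw [hx, Qm_mulVec_last]; exact hvΛ
    refine ⟨fun k => x k.castSucc, ?_⟩
    funext i
    rw [← htop x hxlast i, hx, hcomm v, hv, hty, hy, Fin.snoc_castSucc]
  -- hence det C is a unit
  choose W hW using hsurj
  set D : Matrix (Fin n) (Fin n) ℤ :=
    Matrix.of (fun k j => W (fun i => if i = j then 1 else 0) k) with hD
  have hCD : C * D = 1 := by
    ext i j
    have : (C * D) i j = C.mulVec (fun k => D k j) i := by
      rw [mul_apply]; rfl
    have h2 : (fun k => D k j) = W (fun i => if i = j then 1 else 0) := rfl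
    rw [this, h2, hW]
    simp [one_apply]
  have hunit : IsUnit C.det := by
    have : C.det * D.det = 1 := by rw [← det_mul, hCD, det_one]
    exact IsUnit.of_mul_eq_one _ this
  have hdetC : C.det = 1 ∨ C.det = -1 := Int.isUnit_iff.mp hunit
  -- det B = d * det C
  have hdetB : B.det = d * C.det := by
    rw [det_succ_row B (Fin.last n)]
    rw [Finset.sum_eq_single (Fin.last n)]
    · rw [hBlast, if_pos rfl, Fin.succAbove_last]
      have : (-1 : ℤ) ^ ((Fin.last n : ℕ) + (Fin.last n : ℕ)) = 1 :=
        Even.neg_one_pow ⟨n, rfl⟩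
      rw [this, one_mul, hC]
    · intro j _ hj
      rw [hBlast, if_neg hj, mul_zero, zero_mul]
    · intro h; exact absurd (Finset.mem_univ _) h
  -- det A = det B
  have hdetAB : A.det = B.det := by
    have h1 : (Qm n).det * (Qi n).det = 1 := by rw [← det_mul, Qm_mul_Qi, det_one]
    have : B.det = (Qm n).det * A.det * (Qi n).det := by rw [hB, det_mul, det_mul]
    rw [this]
    have h2 : (Qm n).det * A.det * (Qi n).det = ((Qm n).det * (Qi n).det) * A.det := by ring
    rw [h2, h1, one_mul]
  rcases hdetC with h | h
  · left; rw [hdetAB, hdetB, h, mul_one]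
  · right; rw [hdetAB, hdetB, h]; ring
end

section
/- Let A be a d-stochastic (n+1)×(n+1) integer matrix with d ≠ 0 which is invertible over ℚ and such that A restricts to an automorphism of Λ₀ = {v ∈ ℤ^{n+1} : Σ vᵢ = 0}. Then the difference of any two columns of A⁻¹ (computed over ℚ) is an integer vector, i.e., d·A⁻¹ has all entries in ℤ and the entries of A⁻¹ within each row differ by integers. -/
/-- If A is d-stochastic (d ≠ 0), invertible over ℚ, and restricts to an
automorphism of Λ₀, then d·A⁻¹ is integral and within each row of A⁻¹ the entries
differ by integers. -/
theorem stmt2 (n : ℕ) (hn : 1 ≤ n) (d : ℤ) (hd : d ≠ 0)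
    (A : Matrix (Fin (n + 1)) (Fin (n + 1)) ℤ)
    (hstoch : ∀ j, ∑ i, A i j = d)
    (hinv : IsUnit (A.map ((↑) : ℤ → ℚ)).det)
    (hauto : Set.BijOn A.mulVec {v | ∑ i, v i = 0} {v | ∑ i, v i = 0}) :
    (∀ i j, ∃ z : ℤ, (d : ℚ) * (A.map ((↑) : ℤ → ℚ))⁻¹ i j = z) ∧
      (∀ i j k, ∃ z : ℤ,
        (A.map ((↑) : ℤ → ℚ))⁻¹ i j - (A.map ((↑) : ℤ → ℚ))⁻¹ i k = z) := by
  set Aq := A.map ((↑) : ℤ → ℚ) with hAq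
  have hAinv : Aq⁻¹ * Aq = 1 := Matrix.nonsing_inv_mul _ hinv
  -- casting mulVec
  have hcast : ∀ v : Fin (n+1) → ℤ,
      Aq.mulVec (fun i => (v i : ℚ)) = fun i => ((A.mulVec v i : ℤ) : ℚ) := by
    intro v
    funext i
    simp [Aq, Matrix.mulVec, dotProduct, Matrix.map_apply]
  -- key solving lemma
  have key : ∀ (w : Fin (n+1) → ℤ) (y : Fin (n+1) → ℚ),
      Aq.mulVec (fun i => (w i : ℚ)) = y → ∀ i, Aq⁻¹.mulVec y i = w i := by
    intro w y h i
    have h2 := congrArg (Aq⁻¹.mulVec) h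
    rw [Matrix.mulVec_mulVec, hAinv, Matrix.one_mulVec] at h2
    exact (congrFun h2.symm i)
  constructor
  · intro i j
    -- d • e_j = A (u + v) for integers
    set u : Fin (n+1) → ℤ := Pi.single 0 1 with hu
    set t : Fin (n+1) → ℤ := d • Pi.single j 1 - A.mulVec u with ht
    have hAusum : ∑ i, A.mulVec u i = d := by
      simp only [Matrix.mulVec, dotProduct]
      rw [Finset.sum_comm]
      simp [hu, Pi.single_apply, Finset.sum_ite_eq', hstoch]
    have htsum : ∑ i, t i = 0 := by
      simp [ht, Finset.sum_sub_distrib, Finset.smul_sum, hAusum,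
        Finset.sum_ite_eq', Pi.single_apply]
    obtain ⟨v, hv, hvA⟩ := hauto.surjOn (show t ∈ {v : Fin (n+1) → ℤ | ∑ i, v i = 0} from htsum)
    have hsolve : A.mulVec (u + v) = d • Pi.single j 1 := by
      rw [Matrix.mulVec_add, hvA, ht]
      abel
    have hq : Aq.mulVec (fun i => ((u + v) i : ℚ)) = (d : ℚ) • (Pi.single j (1 : ℚ) : Fin (n+1) → ℚ) := by
      rw [hcast]
      funext i
      rw [hsolve]
      simp [Pi.single_apply]
    have := key (u + v) _ hq i
    rw [Matrix.mulVec_smul, Pi.smul_apply, Matrix.mulVec_single] at this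
    exact ⟨(u + v) i, by simpa [smul_eq_mul] using this⟩
  · intro i j k
    set t : Fin (n+1) → ℤ := Pi.single j 1 - Pi.single k 1 with ht
    have htsum : ∑ i, t i = 0 := by
      simp [ht, Finset.sum_sub_distrib, Pi.single_apply, Finset.sum_ite_eq']
    obtain ⟨v, hv, hvA⟩ := hauto.surjOn (show t ∈ {v : Fin (n+1) → ℤ | ∑ i, v i = 0} from htsum)
    have hq : Aq.mulVec (fun i => (v i : ℚ)) = Pi.single j (1:ℚ) - Pi.single k (1:ℚ) := by
      rw [hcast]
      funext i
      rw [hvA]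
      simp [ht, Pi.single_apply]
    have := key v _ hq i
    rw [Matrix.mulVec_sub, Pi.sub_apply, Matrix.mulVec_single, Matrix.mulVec_single] at this
    exact ⟨v i, by simpa using this⟩
end

section
/- Define, for g ∈ GL_n(ℤ), the degree d(g) as follows: form the (n+1)×(n+1) integer matrix M_g whose bottom-right n×n block is g, whose zeroth row is chosen so that every column of M_g sums to 0, and whose zeroth column is zero; then d(g) = Σ_{i=0}^{n} max(0, −min_j (M_g)_{ij}) (the sum over rows of the negative of the least entry, or 0 if no entry is negative). Then d(g₁g₂) ≤ d(g₁)·d(g₂) for all g₁, g₂ ∈ GL_n(ℤ). -/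
/-- The (n+1)×(n+1) zero-column-sum extension of an n×n integer matrix g:
zeroth column zero, bottom-right block g, zeroth row making all column sums 0. -/
def Mg {n : ℕ} (g : Matrix (Fin n) (Fin n) ℤ) : Matrix (Fin (n + 1)) (Fin (n + 1)) ℤ :=
  Matrix.of fun i j =>
    if hj : j.val = 0 then 0
    else if hi : i.val = 0 then
      -∑ k : Fin n, g k ⟨j.val - 1, by have := j.isLt; omega⟩
    else g ⟨i.val - 1, by have := i.isLt; omega⟩ ⟨j.val - 1, by have := j.isLt; omega⟩

/-- The degree of the monomial Cremona transformation associated to g ∈ GL_n(ℤ):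
the sum over rows of the negative of the least entry of M_g (or 0). -/
def cremonaDeg {n : ℕ} (g : Matrix (Fin n) (Fin n) ℤ) : ℤ :=
  ∑ i : Fin (n + 1), max 0 (-(Finset.univ.inf' Finset.univ_nonempty (Mg g i)))

lemma Mg_col_zero {n : ℕ} (g : Matrix (Fin n) (Fin n) ℤ) (i : Fin (n+1)) :
    Mg g i 0 = 0 := by simp [Mg]

lemma Mg_colsum {n : ℕ} (g : Matrix (Fin n) (Fin n) ℤ) (j : Fin (n+1)) :
    ∑ i, Mg g i j = 0 := by
  rcases Nat.eq_zero_or_pos j.val with h | h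
  · have : j = 0 := Fin.ext h
    simp [this, Mg_col_zero]
  · rw [Fin.sum_univ_succ]
    have h0 : Mg g 0 j = -∑ k : Fin n, g k ⟨j.val - 1, by have := j.isLt; omega⟩ := by
      simp [Mg, Nat.pos_iff_ne_zero.mp h, show j ≠ 0 from fun e => by subst e; simp at h]
    have hs : ∀ i : Fin n, Mg g i.succ j = g i ⟨j.val - 1, by have := j.isLt; omega⟩ := by
      intro i
      simp only [Mg, Matrix.of_apply, Fin.val_succ, Nat.pos_iff_ne_zero.mp h, dif_neg,
        Nat.succ_ne_zero, Nat.add_sub_cancel]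
      simp [Nat.pos_iff_ne_zero.mp h]
    rw [h0]
    simp only [hs]
    ring

lemma Mg_mul {n : ℕ} (g₁ g₂ : Matrix (Fin n) (Fin n) ℤ) :
    Mg (g₁ * g₂) = Mg g₁ * Mg g₂ := by
  ext i j
  rw [Matrix.mul_apply, Fin.sum_univ_succ]
  rw [Mg_col_zero]
  simp only [zero_mul, zero_add]
  by_cases hj : j.val = 0
  · have : j = 0 := Fin.ext hj
    subst this
    simp [Mg_col_zero]
  · have hj' : j.val - 1 < n := by have := j.isLt; omega
    have hMg₂ : ∀ k : Fin n, Mg g₂ k.succ j = g₂ k ⟨j.val - 1, hj'⟩ := by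
      intro k
      simp only [Mg, Matrix.of_apply, dif_neg hj, Fin.val_succ, Nat.succ_ne_zero, dif_neg,
        Nat.add_sub_cancel]
      simp [hj]
    simp only [hMg₂]
    by_cases hi : i.val = 0
    · have hMg₁ : ∀ k : Fin n, Mg g₁ i k.succ = -∑ m : Fin n, g₁ m k := by
        intro k
        simp only [Mg, Matrix.of_apply, Fin.val_succ, Nat.succ_ne_zero, dif_neg, dif_pos hi,
          Nat.add_sub_cancel]
        simp
      simp only [hMg₁]
      simp only [Mg, Matrix.of_apply, dif_neg hj, dif_pos hi, Matrix.mul_apply]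
      rw [Finset.sum_comm]
      simp only [neg_mul, Finset.sum_neg_distrib, Finset.sum_mul]
    · have hi' : i.val - 1 < n := by have := i.isLt; omega
      have hMg₁ : ∀ k : Fin n, Mg g₁ i k.succ = g₁ ⟨i.val - 1, hi'⟩ k := by
        intro k
        simp only [Mg, Matrix.of_apply, Fin.val_succ, Nat.succ_ne_zero, dif_neg, dif_neg hi,
          Nat.add_sub_cancel]
        simp
      simp only [hMg₁]
      simp only [Mg, Matrix.of_apply, dif_neg hj, dif_neg hi, Matrix.mul_apply]

lemma cremona_key {N : ℕ} (M₁ M₂ : Matrix (Fin (N+1)) (Fin (N+1)) ℤ)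
    (h₁0 : ∀ i, M₁ i 0 = 0) (h₂0 : ∀ i, M₂ i 0 = 0)
    (hc₁ : ∀ j, ∑ i, M₁ i j = 0) (hc₂ : ∀ j, ∑ i, M₂ i j = 0) :
    (∑ i, max 0 (-(Finset.univ.inf' Finset.univ_nonempty ((M₁*M₂) i)))) ≤
    (∑ i, max 0 (-(Finset.univ.inf' Finset.univ_nonempty (M₁ i)))) *
    (∑ i, max 0 (-(Finset.univ.inf' Finset.univ_nonempty (M₂ i)))) := by
  set m : Fin (N+1) → ℤ := fun i => -(Finset.univ.inf' Finset.univ_nonempty (M₁ i)) with hm_def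
  set p : Fin (N+1) → ℤ := fun i => -(Finset.univ.inf' Finset.univ_nonempty (M₂ i)) with hp_def
  have hm0 : ∀ i, 0 ≤ m i := fun i => by
    have := Finset.inf'_le (f := M₁ i) (Finset.mem_univ 0)
    rw [h₁0 i] at this; simp only [hm_def]; linarith
  have hp0 : ∀ i, 0 ≤ p i := fun i => by
    have := Finset.inf'_le (f := M₂ i) (Finset.mem_univ 0)
    rw [h₂0 i] at this; simp only [hp_def]; linarith
  have hmle : ∀ i k, -(m i) ≤ M₁ i k := fun i k => by
    have := Finset.inf'_le (f := M₁ i) (Finset.mem_univ k); simp only [hm_def]; linarith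
  have hple : ∀ i k, -(p i) ≤ M₂ i k := fun i k => by
    have := Finset.inf'_le (f := M₂ i) (Finset.mem_univ k); simp only [hp_def]; linarith
  have step1 : ∀ i : Fin (N+1),
      max 0 (-(Finset.univ.inf' Finset.univ_nonempty ((M₁*M₂) i)))
        ≤ ∑ k, (M₁ i k + m i) * p k := by
    intro i
    have hS0 : (0:ℤ) ≤ ∑ k, (M₁ i k + m i) * p k :=
      Finset.sum_nonneg fun k _ => mul_nonneg (by have := hmle i k; linarith) (hp0 k)
    refine max_le hS0 ?_
    obtain ⟨j₀, -, hj₀⟩ := Finset.exists_mem_eq_inf' (Finset.univ_nonempty) ((M₁*M₂) i)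
    rw [hj₀]
    have hentry : (M₁*M₂) i j₀ = ∑ k, (M₁ i k + m i) * M₂ k j₀ := by
      rw [Matrix.mul_apply]
      have : ∑ k, (M₁ i k + m i) * M₂ k j₀
          = ∑ k, M₁ i k * M₂ k j₀ + m i * ∑ k, M₂ k j₀ := by
        rw [Finset.mul_sum, ← Finset.sum_add_distrib]
        congr 1; ext k; ring
      rw [this, hc₂ j₀, mul_zero, add_zero]
    have hlow : -(∑ k, (M₁ i k + m i) * p k) ≤ (M₁*M₂) i j₀ := by
      rw [hentry, ← Finset.sum_neg_distrib]
      refine Finset.sum_le_sum fun k _ => ?_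
      have h1 : 0 ≤ M₁ i k + m i := by have := hmle i k; linarith
      have h2 : -(p k) ≤ M₂ k j₀ := hple k j₀
      nlinarith
    linarith
  calc (∑ i, max 0 (-(Finset.univ.inf' Finset.univ_nonempty ((M₁*M₂) i))))
      ≤ ∑ i, ∑ k, (M₁ i k + m i) * p k := Finset.sum_le_sum fun i _ => step1 i
    _ = ∑ k, (∑ i, (M₁ i k + m i)) * p k := by
        rw [Finset.sum_comm]
        congr 1; ext k; rw [Finset.sum_mul]
    _ = ∑ k, (∑ i, m i) * p k := by
        congr 1; ext k
        rw [Finset.sum_add_distrib, hc₁ k, zero_add]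
    _ = (∑ i, m i) * (∑ k, p k) := by rw [Finset.mul_sum]
    _ = (∑ i, max 0 (m i)) * (∑ k, max 0 (p k)) := by
        congr 1 <;> (congr 1; ext i; rw [max_eq_right (by first | exact hm0 i | exact hp0 i)])
    _ = _ := rfl

/-- d(g₁g₂) ≤ d(g₁)·d(g₂) for g₁, g₂ ∈ GL_n(ℤ). -/
theorem stmt5 (n : ℕ) (hn : 2 ≤ n) (g₁ g₂ : GL (Fin n) ℤ) :
    cremonaDeg ((g₁ * g₂ : GL (Fin n) ℤ) : Matrix (Fin n) (Fin n) ℤ) ≤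
      cremonaDeg (g₁ : Matrix (Fin n) (Fin n) ℤ) *
        cremonaDeg (g₂ : Matrix (Fin n) (Fin n) ℤ) := by
  have hco : ((g₁ * g₂ : GL (Fin n) ℤ) : Matrix (Fin n) (Fin n) ℤ)
      = (g₁ : Matrix (Fin n) (Fin n) ℤ) * (g₂ : Matrix (Fin n) (Fin n) ℤ) := rfl
  rw [hco]
  unfold cremonaDeg
  rw [Mg_mul]
  exact cremona_key _ _ (Mg_col_zero _) (Mg_col_zero _) (Mg_colsum _) (Mg_colsum _)
end

section
/- With the degree function d on GL_n(ℤ) defined via reduced stochastic log-matrices, d(g) = 1 if and only if g lies in the embedded copy of S_{n+1} (the subgroup of GL_n(ℤ) induced by coordinate permutations of ℤ^{n+1} acting on Λ₀). In particular, for g outside this subgroup, d(g) ≥ 2. -/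
/-- The matrix of the automorphism of Λ₀ induced by a permutation σ of the n+1
coordinates, in the basis (e₁−e₀, …, eₙ−e₀). -/
def permMat {n : ℕ} (σ : Equiv.Perm (Fin (n + 1))) : Matrix (Fin n) (Fin n) ℤ :=
  Matrix.of fun i j =>
    (if σ j.succ = i.succ then 1 else 0) - (if σ 0 = i.succ then 1 else 0)

namespace Stmt8Aux

variable {n : ℕ}

lemma Mg_col0 (g : Matrix (Fin n) (Fin n) ℤ) (i : Fin (n+1)) : Mg g i 0 = 0 := by
  simp [Mg]

lemma Mg_succ_succ (g : Matrix (Fin n) (Fin n) ℤ) (i j : Fin n) :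
    Mg g i.succ j.succ = g i j := by
  simp [Mg, Fin.val_succ, Fin.succ_ne_zero]

lemma Mg_zero_succ (g : Matrix (Fin n) (Fin n) ℤ) (j : Fin n) :
    Mg g 0 j.succ = -∑ k : Fin n, g k j := by
  simp [Mg, Fin.val_succ]

lemma Mg_colsum (g : Matrix (Fin n) (Fin n) ℤ) (j : Fin (n+1)) :
    ∑ i, Mg g i j = 0 := by
  rcases Fin.eq_zero_or_eq_succ j with rfl | ⟨t, rfl⟩
  · simp [Mg_col0]
  · rw [Fin.sum_univ_succ, Mg_zero_succ]
    simp [Mg_succ_succ]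

lemma sum_ind (x : Fin (n+1)) :
    ∑ k : Fin n, (if x = k.succ then (1:ℤ) else 0) = if x = 0 then 0 else 1 := by
  rcases Fin.eq_zero_or_eq_succ x with rfl | ⟨t, rfl⟩
  · simp [(Fin.succ_ne_zero _).symm]
  · simp [Fin.succ_inj, Fin.succ_ne_zero, Finset.sum_ite_eq]

lemma Mg_permMat (σ : Equiv.Perm (Fin (n+1))) (i j : Fin (n+1)) :
    Mg (permMat σ) i j = (if σ j = i then 1 else 0) - (if σ 0 = i then 1 else 0) := by
  rcases Fin.eq_zero_or_eq_succ j with rfl | ⟨t, rfl⟩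
  · rw [Mg_col0]; ring
  · rcases Fin.eq_zero_or_eq_succ i with rfl | ⟨s, rfl⟩
    · rw [Mg_zero_succ]
      have : ∀ k : Fin n, permMat σ k t =
          (if σ t.succ = k.succ then (1:ℤ) else 0) - (if σ 0 = k.succ then 1 else 0) :=
        fun k => rfl
      simp only [this, Finset.sum_sub_distrib, sum_ind]
      split_ifs <;> simp_all
    · rw [Mg_succ_succ]; rfl

lemma sum_eq_one_int {α : Type*} [DecidableEq α] {s : Finset α} {f : α → ℤ}
    (h0 : ∀ i ∈ s, 0 ≤ f i) (h1 : ∑ i ∈ s, f i = 1) :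
    ∃ c ∈ s, f c = 1 ∧ ∀ i ∈ s, i ≠ c → f i = 0 := by
  have hpos : ∃ c ∈ s, 0 < f c := by
    by_contra hc
    push_neg at hc
    have : ∑ i ∈ s, f i ≤ 0 := Finset.sum_nonpos fun i hi => hc i hi
    omega
  obtain ⟨c, hcs, hc⟩ := hpos
  have hsplit := Finset.add_sum_erase s f hcs
  have hnn : 0 ≤ ∑ i ∈ s.erase c, f i :=
    Finset.sum_nonneg fun i hi => h0 i (Finset.mem_of_mem_erase hi)
  have hfc : f c = 1 := by omega
  have hz : ∑ i ∈ s.erase c, f i = 0 := by omega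
  refine ⟨c, hcs, hfc, fun i hi hic => ?_⟩
  exact (Finset.sum_eq_zero_iff_of_nonneg
    (fun i hi => h0 i (Finset.mem_of_mem_erase hi))).mp hz i (Finset.mem_erase.mpr ⟨hic, hi⟩)

def rowMin (g : Matrix (Fin n) (Fin n) ℤ) (i : Fin (n+1)) : ℤ :=
  Finset.univ.inf' Finset.univ_nonempty (Mg g i)

lemma rowMin_le (g : Matrix (Fin n) (Fin n) ℤ) (i : Fin (n+1)) (j : Fin (n+1)) :
    rowMin g i ≤ Mg g i j := Finset.inf'_le _ (Finset.mem_univ j)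

lemma rowMin_nonpos (g : Matrix (Fin n) (Fin n) ℤ) (i : Fin (n+1)) : rowMin g i ≤ 0 :=
  (rowMin_le g i 0).trans_eq (Mg_col0 g i)

lemma cremonaDeg_eq (g : Matrix (Fin n) (Fin n) ℤ) :
    cremonaDeg g = ∑ i, -(rowMin g i) := by
  refine Finset.sum_congr rfl fun i _ => ?_
  exact max_eq_right (neg_nonneg.mpr (rowMin_nonpos g i))

lemma rowMin_eq_of (g : Matrix (Fin n) (Fin n) ℤ) (i : Fin (n+1)) (c : ℤ)
    (hub : ∃ j, Mg g i j = c) (hlb : ∀ j, c ≤ Mg g i j) : rowMin g i = c := by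
  obtain ⟨j, hj⟩ := hub
  exact le_antisymm (hj ▸ rowMin_le g i j) (Finset.le_inf' _ _ fun b _ => hlb b)

lemma one_ne_zero' (hn : 2 ≤ n) : (1 : Fin (n+1)) ≠ 0 := by
  intro h
  have := congrArg Fin.val h
  simp [Fin.val_one'] at this
  omega

/-- If `Mg g` has the canonical permutation form, the degree is 1. -/
lemma deg_eq_one_of_form (hn : 2 ≤ n) (g : Matrix (Fin n) (Fin n) ℤ)
    (σ : Equiv.Perm (Fin (n+1)))
    (hA : ∀ i j, Mg g i j = (if σ j = i then 1 else 0) - (if σ 0 = i then 1 else 0)) :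
    cremonaDeg g = 1 := by
  have hrm : ∀ i, rowMin g i = if σ 0 = i then -1 else 0 := by
    intro i
    by_cases h : σ 0 = i
    · rw [if_pos h]
      refine rowMin_eq_of g i (-1) ⟨1, ?_⟩ fun j => ?_
      · have h1 : σ 1 ≠ i := fun hc =>
          one_ne_zero' hn (σ.injective (hc.trans h.symm))
        rw [hA, if_neg h1, if_pos h]; ring
      · rw [hA]; split_ifs <;> omega
    · rw [if_neg h]
      refine rowMin_eq_of g i 0 ⟨0, ?_⟩ fun j => ?_
      · rw [hA]; ring
      · rw [hA, if_neg h]; split_ifs <;> omega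
  rw [cremonaDeg_eq]
  have : ∀ i, -(rowMin g i) = if σ 0 = i then (1:ℤ) else 0 := by
    intro i; rw [hrm]; split_ifs <;> ring
  simp only [this]
  simp [Finset.sum_ite_eq]

/-- If g has nonzero determinant, the degree is positive. -/
lemma deg_pos (g : Matrix (Fin n) (Fin n) ℤ) (hn : 2 ≤ n) (hdet : g.det ≠ 0) :
    1 ≤ cremonaDeg g := by
  have hnn : ∀ i ∈ (Finset.univ : Finset (Fin (n+1))), (0:ℤ) ≤ -(rowMin g i) :=
    fun i _ => neg_nonneg.mpr (rowMin_nonpos g i)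
  rw [cremonaDeg_eq]
  by_contra hc
  push_neg at hc
  have h0 : ∑ i, -(rowMin g i) = 0 :=
    le_antisymm (by omega) (Finset.sum_nonneg hnn)
  have hz : ∀ i, rowMin g i = 0 := by
    intro i
    have := (Finset.sum_eq_zero_iff_of_nonneg hnn).mp h0 i (Finset.mem_univ i)
    omega
  have hAnn : ∀ i j, (0:ℤ) ≤ Mg g i j := fun i j => (hz i) ▸ rowMin_le g i j
  have hcol : ∀ i j, Mg g i j = 0 := by
    intro i j
    exact (Finset.sum_eq_zero_iff_of_nonneg (fun i _ => hAnn i j)).mp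
      (Mg_colsum g j) i (Finset.mem_univ i)
  have hg0 : g = 0 := by
    ext i j
    have := hcol i.succ j.succ
    rw [Mg_succ_succ] at this
    simpa using this
  rw [hg0] at hdet
  have : Nonempty (Fin n) := ⟨⟨0, by omega⟩⟩
  simp [Matrix.det_zero] at hdet

/-- Forward direction: degree 1 implies permutation form. -/
lemma forward (hn : 2 ≤ n) (g : Matrix (Fin n) (Fin n) ℤ) (hdet : g.det ≠ 0)
    (h1 : cremonaDeg g = 1) : ∃ σ : Equiv.Perm (Fin (n+1)), g = permMat σ := by
  have hnn : ∀ i ∈ (Finset.univ : Finset (Fin (n+1))), (0:ℤ) ≤ -(rowMin g i) :=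
    fun i _ => neg_nonneg.mpr (rowMin_nonpos g i)
  rw [cremonaDeg_eq] at h1
  obtain ⟨i₀, -, hi₀, hrest⟩ := sum_eq_one_int hnn h1
  have hmi₀ : rowMin g i₀ = -1 := by omega
  have hm0 : ∀ i, i ≠ i₀ → rowMin g i = 0 := by
    intro i hi
    have := hrest i (Finset.mem_univ i) hi
    omega
  have hA_nonneg : ∀ i, i ≠ i₀ → ∀ j, (0:ℤ) ≤ Mg g i j :=
    fun i hi j => (hm0 i hi) ▸ rowMin_le g i j
  have hA_i₀ : ∀ j, (-1:ℤ) ≤ Mg g i₀ j := fun j => hmi₀ ▸ rowMin_le g i₀ j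
  -- column structure
  have key : ∀ j : Fin (n+1), ∃ c : Fin (n+1),
      ∀ i, Mg g i j = (if c = i then 1 else 0) - (if i₀ = i then 1 else 0) := by
    intro j
    have hsum : Mg g i₀ j + ∑ i ∈ Finset.univ.erase i₀, Mg g i j = 0 := by
      have h' := Finset.add_sum_erase Finset.univ (fun i => Mg g i j) (Finset.mem_univ i₀)
      rw [h']; exact Mg_colsum g j
    have hernn : ∀ i ∈ Finset.univ.erase i₀, (0:ℤ) ≤ Mg g i j :=
      fun i hi => hA_nonneg i (Finset.mem_erase.mp hi).1 j
    have hnn' : 0 ≤ ∑ i ∈ Finset.univ.erase i₀, Mg g i j := Finset.sum_nonneg hernn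
    have hle : Mg g i₀ j ≤ 0 := by omega
    rcases (by have := hA_i₀ j; omega : Mg g i₀ j = 0 ∨ Mg g i₀ j = -1) with h0 | hneg
    · refine ⟨i₀, fun i => ?_⟩
      have hz : ∀ i ∈ Finset.univ.erase i₀, Mg g i j = 0 :=
        (Finset.sum_eq_zero_iff_of_nonneg hernn).mp (by omega)
      by_cases hi : i = i₀
      · subst hi; rw [h0]; simp
      · rw [hz i (Finset.mem_erase.mpr ⟨hi, Finset.mem_univ i⟩),
          if_neg (fun h => hi h.symm)]
        ring
    · have hone : ∑ i ∈ Finset.univ.erase i₀, Mg g i j = 1 := by omega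
      obtain ⟨c, hcmem, hc1, hcz⟩ := sum_eq_one_int hernn hone
      have hci₀ : c ≠ i₀ := (Finset.mem_erase.mp hcmem).1
      refine ⟨c, fun i => ?_⟩
      by_cases hi : i = i₀
      · subst hi; rw [hneg, if_neg hci₀, if_pos rfl]; ring
      · by_cases hic : i = c
        · subst hic; rw [hc1, if_pos rfl, if_neg (fun h => hi h.symm)]; ring
        · rw [hcz i (Finset.mem_erase.mpr ⟨hi, Finset.mem_univ i⟩) hic,
            if_neg (fun h => hic h.symm), if_neg (fun h => hi h.symm)]
          ring
  choose f hf using key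
  have hf0 : f 0 = i₀ := by
    have h := hf 0 (f 0)
    rw [Mg_col0, if_pos rfl] at h
    split_ifs at h with h'
    · exact h'.symm
    · omega
  have hinj : Function.Injective f := by
    intro a b hab
    by_contra hne
    have hcols : ∀ i, Mg g i a = Mg g i b := fun i => by rw [hf a i, hf b i, hab]
    rcases Fin.eq_zero_or_eq_succ a with rfl | ⟨t, rfl⟩ <;>
      rcases Fin.eq_zero_or_eq_succ b with rfl | ⟨s, rfl⟩
    · exact hne rfl
    · refine hdet (Matrix.det_eq_zero_of_column_eq_zero s fun i => ?_)
      have := (hcols i.succ).symm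
      rw [Mg_col0, Mg_succ_succ] at this
      exact this
    · refine hdet (Matrix.det_eq_zero_of_column_eq_zero t fun i => ?_)
      have := hcols i.succ
      rw [Mg_col0, Mg_succ_succ] at this
      exact this
    · have hts : t ≠ s := fun h => hne (by rw [h])
      refine hdet ?_
      rw [← Matrix.det_transpose]
      refine Matrix.det_zero_of_row_eq hts ?_
      funext i
      have := hcols i.succ
      rw [Mg_succ_succ, Mg_succ_succ] at this
      exact this
  have hbij : Function.Bijective f := Finite.injective_iff_bijective.mp hinj
  refine ⟨Equiv.ofBijective f hbij, ?_⟩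
  ext i j
  have h := hf j.succ i.succ
  rw [Mg_succ_succ] at h
  have hσ : (Equiv.ofBijective f hbij) j.succ = f j.succ := rfl
  have hσ0 : (Equiv.ofBijective f hbij) 0 = i₀ := hf0
  show g i j = permMat _ i j
  rw [permMat]
  simp only [Matrix.of_apply, hσ, hσ0]
  exact h

end Stmt8Aux

open Stmt8Aux in
/-- d(g) = 1 iff g lies in the embedded S_{n+1}; otherwise d(g) ≥ 2. -/
theorem stmt8 (n : ℕ) (hn : 2 ≤ n) (g : GL (Fin n) ℤ) :
    (cremonaDeg (g : Matrix (Fin n) (Fin n) ℤ) = 1 ↔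
        ∃ σ : Equiv.Perm (Fin (n + 1)), (g : Matrix (Fin n) (Fin n) ℤ) = permMat σ) ∧
      ((¬∃ σ : Equiv.Perm (Fin (n + 1)),
          (g : Matrix (Fin n) (Fin n) ℤ) = permMat σ) →
        2 ≤ cremonaDeg (g : Matrix (Fin n) (Fin n) ℤ)) := by
  have hdet : (g : Matrix (Fin n) (Fin n) ℤ).det ≠ 0 := by
    have : IsUnit (g : Matrix (Fin n) (Fin n) ℤ) := g.isUnit
    have := (Matrix.isUnit_iff_isUnit_det _).mp this
    exact this.ne_zero
  have hmain : cremonaDeg (g : Matrix (Fin n) (Fin n) ℤ) = 1 ↔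
      ∃ σ : Equiv.Perm (Fin (n + 1)), (g : Matrix (Fin n) (Fin n) ℤ) = permMat σ := by
    constructor
    · exact fun h1 => forward hn _ hdet h1
    · rintro ⟨σ, hσ⟩
      rw [hσ]
      exact deg_eq_one_of_form hn _ σ (fun i j => Mg_permMat σ i j)
  refine ⟨hmain, fun hno => ?_⟩
  have h1 := deg_pos (g : Matrix (Fin n) (Fin n) ℤ) hn hdet
  have hne : cremonaDeg (g : Matrix (Fin n) (Fin n) ℤ) ≠ 1 :=
    fun h => hno (hmain.mp h)
  omega
end

section
/- Let A be a d-stochastic (n+1)×(n+1) integer matrix with d ≥ 1 that restricts to an automorphism of Λ₀ = {v ∈ ℤ^{n+1} : Σvᵢ = 0}, and let A⁻¹ be its inverse over ℚ. For each row i let rᵢ be the minimum entry of row i of A⁻¹. Then the matrix B = A⁻¹ − Σᵢ rᵢ Rᵢ (where Rᵢ has row i all ones and other rows zero) has all entries in ℕ, each row of B contains a zero entry, B is stochastic, and its common column sum equals 1/d − Σᵢ rᵢ. -/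
/-- For a d-stochastic A (d ≥ 1) restricting to an automorphism of Λ₀,
subtracting from each row of A⁻¹ its minimum rᵢ yields a reduced matrix with entries
in ℕ, a zero in each row, and all column sums equal to 1/d − Σᵢ rᵢ. -/
theorem stmt10 (n : ℕ) (hn : 1 ≤ n) (d : ℤ) (hd : 1 ≤ d)
    (A : Matrix (Fin (n + 1)) (Fin (n + 1)) ℤ)
    (hstoch : ∀ j, ∑ i, A i j = d)
    (hauto : Set.BijOn A.mulVec {v | ∑ i, v i = 0} {v | ∑ i, v i = 0})
    (Ainv : Matrix (Fin (n + 1)) (Fin (n + 1)) ℚ)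
    (hAinv : Ainv = (A.map ((↑) : ℤ → ℚ))⁻¹)
    (r : Fin (n + 1) → ℚ)
    (hr : ∀ i, r i = Finset.univ.inf' Finset.univ_nonempty (Ainv i))
    (B : Matrix (Fin (n + 1)) (Fin (n + 1)) ℚ)
    (hB : B = Matrix.of fun i j => Ainv i j - r i) :
    (∀ i j, ∃ m : ℕ, B i j = m) ∧
      (∀ i, ∃ j, B i j = 0) ∧
      (∀ j, ∑ i, B i j = 1 / (d : ℚ) - ∑ i, r i) := by
  have hd0 : (d : ℚ) ≠ 0 := by
    have : (1:ℚ) ≤ (d:ℚ) := by exact_mod_cast hd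
    linarith
  set AQ := A.map ((↑) : ℤ → ℚ) with hAQ
  -- det A ≠ 0
  have hdet : A.det ≠ 0 := by
    intro h
    obtain ⟨v, hv, hAv⟩ := Matrix.exists_mulVec_eq_zero_iff.mpr h
    have h2 : ∑ i, A.mulVec v i = d * ∑ j, v j := by
      simp only [Matrix.mulVec, dotProduct]
      rw [Finset.sum_comm]
      rw [Finset.mul_sum]
      refine Finset.sum_congr rfl fun j _ => ?_
      rw [← Finset.sum_mul, hstoch]
    have h1 : ∑ i, A.mulVec v i = 0 := by rw [hAv]; simp
    have hsum : ∑ j, v j = 0 := by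
      have hd' : d ≠ 0 := by omega
      have := h1.symm.trans h2
      exact (mul_eq_zero.mp this.symm).resolve_left hd'
    have h0 : A.mulVec v = A.mulVec 0 := by rw [hAv, Matrix.mulVec_zero]
    exact hv (hauto.injOn hsum (by simp) h0)
  have hdetQ : IsUnit AQ.det := by
    have hc : AQ.det = ((A.det : ℤ) : ℚ) := by
      rw [show AQ = (Int.castRingHom ℚ).mapMatrix A from rfl, ← RingHom.map_det]
      rfl
    rw [hc]
    simp only [isUnit_iff_ne_zero, ne_eq, Int.cast_eq_zero]
    exact hdet
  have hinv1 : AQ⁻¹ * AQ = 1 := Matrix.nonsing_inv_mul _ hdetQ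
  have hinv2 : AQ * AQ⁻¹ = 1 := Matrix.mul_nonsing_inv _ hdetQ
  subst hAinv hB
  -- entries of each row of AQ⁻¹ differ by integers
  have key : ∀ i j k, ∃ z : ℤ, AQ⁻¹ i j - AQ⁻¹ i k = z := by
    intro i j k
    set e : Fin (n+1) → ℤ :=
      fun l => (if l = j then 1 else 0) - (if l = k then 1 else 0) with he
    have hes : e ∈ {v : Fin (n+1) → ℤ | ∑ i, v i = 0} := by simp [he]
    obtain ⟨w, hw, hAw⟩ := hauto.surjOn hes
    refine ⟨w i, ?_⟩
    have hcast : AQ.mulVec (fun l => (w l : ℚ)) = fun l => (e l : ℚ) := by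
      funext l
      have := congrFun hAw l
      simp only [Matrix.mulVec, dotProduct] at this ⊢
      rw [← this]
      push_cast [hAQ, Matrix.map_apply]
      rfl
    have hinvv : AQ⁻¹.mulVec (fun l => (e l : ℚ)) = fun l => (w l : ℚ) := by
      rw [← hcast, Matrix.mulVec_mulVec, hinv1, Matrix.one_mulVec]
    have h2 := congrFun hinvv i
    simp only [Matrix.mulVec, dotProduct, he] at h2
    rw [← h2]
    push_cast
    rw [Finset.sum_congr rfl (fun l _ => mul_sub (AQ⁻¹ i l) _ _),
      Finset.sum_sub_distrib]
    simp [mul_ite]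
  -- column sums of AQ⁻¹
  have hcol : ∀ j, ∑ i, AQ⁻¹ i j = 1 / (d : ℚ) := by
    intro j
    have h1 : ∑ i, (AQ * AQ⁻¹) i j = 1 := by
      rw [hinv2]
      simp [Matrix.one_apply]
    have h2 : ∑ i, (AQ * AQ⁻¹) i j = d * ∑ k, AQ⁻¹ k j := by
      simp only [Matrix.mul_apply]
      rw [Finset.sum_comm, Finset.mul_sum]
      refine Finset.sum_congr rfl fun k _ => ?_
      rw [← Finset.sum_mul]
      congr 1
      have := hstoch k
      rw [hAQ]
      simp only [Matrix.map_apply]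
      exact_mod_cast congrArg (fun z : ℤ => (z : ℚ)) this
    have := h1.symm.trans h2
    field_simp at this ⊢
    linarith
  -- min attained
  have hmin : ∀ i, ∃ k, Finset.univ.inf' Finset.univ_nonempty (AQ⁻¹ i) = AQ⁻¹ i k := by
    intro i
    obtain ⟨k, _, hk⟩ := Finset.exists_mem_eq_inf' Finset.univ_nonempty (AQ⁻¹ i)
    exact ⟨k, hk⟩
  refine ⟨?_, ?_, ?_⟩
  · intro i j
    obtain ⟨k, hk⟩ := hmin i
    obtain ⟨z, hz⟩ := key i j k
    have hle : r i ≤ AQ⁻¹ i j := by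
      rw [hr i]
      exact Finset.inf'_le _ (Finset.mem_univ j)
    have hB : (Matrix.of fun i j => AQ⁻¹ i j - r i) i j = (z : ℚ) := by
      simp only [Matrix.of_apply]
      rw [hr i, hk, hz]
    have hz0 : 0 ≤ z := by
      have : (0:ℚ) ≤ (z:ℚ) := by
        rw [← hB]
        simp only [Matrix.of_apply]
        linarith
      exact_mod_cast this
    exact ⟨z.toNat, by rw [hB]; exact_mod_cast (Int.toNat_of_nonneg hz0).symm⟩
  · intro i
    obtain ⟨k, hk⟩ := hmin i
    exact ⟨k, by simp only [Matrix.of_apply]; rw [hr i, hk, sub_self]⟩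
  · intro j
    simp only [Matrix.of_apply]
    rw [Finset.sum_sub_distrib, hcol j]
end

section
/- Let A be the (n+1)×(n+1) matrix of Example 2 with d ≥ 3 (upper triangular, A₁₁ = d, superdiagonal entries d−1, other diagonal entries 1). The degree of the inverse monomial Cremona transformation, computed as 1/d − Σᵢ rᵢ where rᵢ is the least entry in row i of A⁻¹ (over ℚ), equals ((d−1)ⁿ − 1)/(d−2). -/
def ofl (t : ℕ) : ℕ := if Even t then t - 1 else t

lemma ofl_le (t : ℕ) : ofl t ≤ t := by unfold ofl; split <;> omega

lemma odd_ofl {t : ℕ} (ht : 1 ≤ t) : Odd (ofl t) := by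
  unfold ofl; split
  · next h => obtain ⟨k, hk⟩ := h; exact ⟨k - 1, by omega⟩
  · next h => exact Nat.not_even_iff_odd.mp h

lemma le_ofl {e t : ℕ} (he : Odd e) (h : e ≤ t) : e ≤ ofl t := by
  unfold ofl; split
  · next ht => rcases he with ⟨k, hk⟩; rcases ht with ⟨m, hm⟩; omega
  · exact h

lemma key (c : ℚ) (hc1 : c + 1 ≠ 0) (hc2 : c - 1 ≠ 0) :
    ∀ n, 2 ≤ n → (1 + c ^ ofl n) / (c + 1) + ∑ t ∈ Finset.Ico 1 n, c ^ ofl t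
      = (c ^ n - 1) / (c - 1) := by
  intro n hn
  induction n, hn using Nat.le_induction with
  | base =>
    rw [show ofl 2 = 1 from rfl, show Finset.Ico 1 2 = {1} from rfl, Finset.sum_singleton,
      show ofl 1 = 1 from rfl]
    field_simp
    ring
  | succ n hn ih =>
    rw [Finset.sum_Ico_succ_top (by omega)]
    have hofl : ofl n = n - 1 ∧ ofl (n+1) = n + 1 ∨ ofl n = n ∧ ofl (n+1) = n := by
      unfold ofl
      rcases Nat.even_or_odd n with h | h
      · left; rw [if_pos h, if_neg (by simpa [Nat.even_add_one] using h)]; omega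
      · right; rw [if_neg (by simpa using h), if_pos (by simpa [Nat.even_add_one] using h)]; omega
    obtain ⟨k, hk⟩ : ∃ k, n = k + 2 := ⟨n - 2, by omega⟩
    subst hk
    set S := ∑ t ∈ Finset.Ico 1 (k+2), c ^ ofl t with hSdef
    rcases hofl with ⟨h1, h2⟩ | ⟨h1, h2⟩ <;> rw [h1] at ih ⊢ <;> rw [h2]
    · have hS : S = (c ^ (k+2) - 1) / (c - 1) - (1 + c ^ (k + 2 - 1)) / (c + 1) := by
        linarith [ih]
      rw [hS]
      simp only [show k + 2 - 1 = k + 1 from rfl]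
      field_simp
      ring
    · have hS : S = (c ^ (k+2) - 1) / (c - 1) - (1 + c ^ (k + 2)) / (c + 1) := by
        linarith [ih]
      rw [hS]
      field_simp
      ring

lemma powcancel (dq : ℚ) (e : ℕ) (he : 1 ≤ e) :
    (1 - dq) ^ e + (dq - 1) * (1 - dq) ^ (e - 1) = 0 := by
  obtain ⟨f, rfl⟩ : ∃ f, e = f + 1 := ⟨e - 1, by omega⟩
  simp [pow_succ]
  ring

lemma mulB (n : ℕ) (hn : 0 < n) (dq : ℚ) (hd : dq ≠ 0) :
    (Matrix.of fun i j : Fin (n+1) => if i = j then (if (i:ℕ) = 0 then dq else 1)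
        else if (j:ℕ) = (i:ℕ) + 1 then dq - 1 else 0) *
      (Matrix.of fun i j : Fin (n+1) => if (i:ℕ) ≤ (j:ℕ) then
        (1 - dq) ^ ((j:ℕ) - (i:ℕ)) * (if (i:ℕ) = 0 then dq⁻¹ else 1) else 0) = 1 := by
  ext i k
  rw [Matrix.mul_apply]
  by_cases hi : (i:ℕ) < n
  · have hne : i ≠ (⟨(i:ℕ)+1, by omega⟩ : Fin (n+1)) := by
      simp [Fin.ext_iff]
    rw [Fintype.sum_eq_add i ⟨(i:ℕ)+1, by omega⟩ hne]
    · simp only [Matrix.of_apply, Matrix.one_apply, Fin.ext_iff]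
      split_ifs <;> try (exfalso; omega)
      all_goals simp_all
      all_goals try (exfalso; omega)
      all_goals first
        | (rw [show ((k:ℕ)) - ((i:ℕ)+1) = ((k:ℕ) - (i:ℕ)) - 1 by omega]
           linarith [powcancel dq ((k:ℕ) - (i:ℕ)) (by omega)])
        | (rw [show dq * ((1 - dq) ^ (k:ℕ) * dq⁻¹) = (1 - dq) ^ (k:ℕ) by field_simp]
           linarith [powcancel dq (k:ℕ) (by omega)])
    · intro j hji
      simp only [Matrix.of_apply]
      rw [if_neg (by intro h; exact hji.1 (by rw [← h])), if_neg (by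
        intro h; exact hji.2 (Fin.ext h))]
      ring
  · have hi' : (i:ℕ) = n := by omega
    rw [Fintype.sum_eq_single i]
    · simp only [Matrix.of_apply, Matrix.one_apply, Fin.ext_iff]
      split_ifs <;> try (exfalso; omega)
      all_goals simp_all
      all_goals (exfalso; omega)
    · intro j hji
      simp only [Matrix.of_apply]
      rw [if_neg (by intro h; exact hji h.symm), if_neg (by
        have := j.isLt; omega)]
      ring


/-- For the matrix A of Example 2 with d ≥ 3, the inverse degree
1/d − Σᵢ rᵢ (rᵢ the least entry of row i of A⁻¹ over ℚ) equals ((d−1)ⁿ − 1)/(d−2). -/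
theorem stmt14 (n : ℕ) (hn : 2 ≤ n) (d : ℤ) (hd : 3 ≤ d)
    (A : Matrix (Fin (n + 1)) (Fin (n + 1)) ℤ)
    (hA : A = Matrix.of fun i j =>
      if i = j then (if i.val = 0 then d else 1)
      else if j.val = i.val + 1 then d - 1 else 0)
    (r : Fin (n + 1) → ℚ)
    (hr : ∀ i, r i = Finset.univ.inf' Finset.univ_nonempty
      ((A.map ((↑) : ℤ → ℚ))⁻¹ i)) :
    1 / (d : ℚ) - ∑ i, r i = (((d : ℚ) - 1) ^ n - 1) / ((d : ℚ) - 2) := by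
  set dq : ℚ := (d : ℚ) with hdq_def
  have hdq : (3:ℚ) ≤ dq := by rw [hdq_def]; exact_mod_cast hd
  have hd0 : dq ≠ 0 := by linarith
  have hc0 : (0:ℚ) < dq - 1 := by linarith
  set B : Matrix (Fin (n+1)) (Fin (n+1)) ℚ :=
    Matrix.of (fun i j : Fin (n+1) => if (i:ℕ) ≤ (j:ℕ) then
      (1 - dq) ^ ((j:ℕ) - (i:ℕ)) * (if (i:ℕ) = 0 then dq⁻¹ else 1) else 0) with hB
  have hM : A.map ((↑) : ℤ → ℚ) = Matrix.of (fun i j : Fin (n+1) =>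
      if i = j then (if (i:ℕ) = 0 then dq else 1)
      else if (j:ℕ) = (i:ℕ) + 1 then dq - 1 else 0) := by
    subst hA
    ext i j
    simp [Matrix.map_apply, apply_ite ((↑) : ℤ → ℚ)]
    rfl
  have hinv : (A.map ((↑) : ℤ → ℚ))⁻¹ = B := by
    rw [hM]
    exact Matrix.inv_eq_right_inv (mulB n (by omega) dq hd0)
  -- row minima
  have hri : ∀ i : Fin (n+1), r i =
      if (i:ℕ) = n then 0
      else -((dq-1) ^ ofl (n - (i:ℕ))) * (if (i:ℕ) = 0 then dq⁻¹ else 1) := by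
    intro i
    rw [hr i, hinv]
    have hspos : (0:ℚ) < (if (i:ℕ) = 0 then dq⁻¹ else 1) := by
      split_ifs
      · exact inv_pos.mpr (by linarith)
      · norm_num
    by_cases hi : (i:ℕ) = n
    · rw [if_pos hi]
      apply le_antisymm
      · have h0 : B i ⟨0, by omega⟩ = 0 := by
          rw [hB, Matrix.of_apply, if_neg (by show ¬ ((i:ℕ) ≤ 0); omega)]
        calc Finset.univ.inf' Finset.univ_nonempty (B i) ≤ B i ⟨0, by omega⟩ :=
              Finset.inf'_le _ (Finset.mem_univ _)
          _ = 0 := h0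
      · apply Finset.le_inf'
        intro j _
        rw [hB, Matrix.of_apply]
        split_ifs with h1 h2
        · exfalso; omega
        · have hj : (j:ℕ) - (i:ℕ) = 0 := by omega
          rw [hj, pow_zero, one_mul]
          norm_num
        · exact le_refl 0
    · rw [if_neg hi]
      have hlt : (i:ℕ) < n := by have := i.isLt; omega
      have hodd : Odd (ofl (n - (i:ℕ))) := odd_ofl (by omega)
      have hmle : ofl (n - (i:ℕ)) ≤ n - (i:ℕ) := ofl_le _
      have hcore : ∀ e, e ≤ n - (i:ℕ) → -((dq-1) ^ ofl (n - (i:ℕ))) ≤ (1 - dq) ^ e := by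
        intro e he
        rw [show (1 - dq) = -(dq - 1) by ring]
        rcases Nat.even_or_odd e with hpar | hpar
        · rw [hpar.neg_pow]
          have h1 : (0:ℚ) ≤ (dq-1) ^ e := by positivity
          have h2 : (0:ℚ) ≤ (dq-1) ^ ofl (n - (i:ℕ)) := by positivity
          linarith
        · rw [hpar.neg_pow]
          exact neg_le_neg (pow_le_pow_right₀ (by linarith) (le_ofl hpar he))
      apply le_antisymm
      · have hjm : ((⟨(i:ℕ) + ofl (n - (i:ℕ)), by omega⟩ : Fin (n+1)) : ℕ)
            = (i:ℕ) + ofl (n - (i:ℕ)) := rfl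
        calc Finset.univ.inf' Finset.univ_nonempty (B i)
            ≤ B i ⟨(i:ℕ) + ofl (n - (i:ℕ)), by omega⟩ := Finset.inf'_le _ (Finset.mem_univ _)
          _ = -((dq-1) ^ ofl (n - (i:ℕ))) * (if (i:ℕ) = 0 then dq⁻¹ else 1) := by
              rw [hB, Matrix.of_apply, hjm]
              rw [if_pos (by omega), show (i:ℕ) + ofl (n - (i:ℕ)) - (i:ℕ) = ofl (n - (i:ℕ)) by omega]
              rw [show (1 - dq) = -(dq - 1) by ring, hodd.neg_pow]
      · apply Finset.le_inf'
        intro j _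
        rw [hB, Matrix.of_apply]
        by_cases h1 : (i:ℕ) ≤ (j:ℕ)
        · rw [if_pos h1]
          exact mul_le_mul_of_nonneg_right (hcore _ (by have := j.isLt; omega)) hspos.le
        · rw [if_neg h1]
          have := mul_pos (pow_pos hc0 (ofl (n - (i:ℕ)))) hspos
          linarith
  -- the sum
  set g : ℕ → ℚ := fun i => if i = n then 0
      else -((dq-1) ^ ofl (n - i)) * (if i = 0 then dq⁻¹ else 1) with hg
  have hsum : ∑ i, r i = ∑ i ∈ Finset.range (n+1), g i := by
    rw [← Fin.sum_univ_eq_sum_range]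
    exact Finset.sum_congr rfl (fun i _ => hri i)
  rw [hsum, Finset.sum_range_succ, Finset.range_eq_Ico,
    Finset.sum_eq_sum_Ico_succ_bot (by omega : 0 < n)]
  have hg0 : g 0 = -((dq-1) ^ ofl n) * dq⁻¹ := by
    rw [hg]; simp only [if_neg (by omega : ¬ (0:ℕ) = n), if_pos rfl]
    norm_num
  have hgn : g n = 0 := by rw [hg]; simp
  have hmid : ∑ i ∈ Finset.Ico 1 n, g i = ∑ t ∈ Finset.Ico 1 n, -((dq-1) ^ ofl t) := by
    rw [show (∑ i ∈ Finset.Ico 1 n, g i) = ∑ i ∈ Finset.Ico 1 n, -((dq-1) ^ ofl (n - i)) from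
      Finset.sum_congr rfl (fun i hi => by
        simp only [Finset.mem_Ico] at hi
        rw [hg]
        simp only [if_neg (by omega : ¬ i = n), if_neg (by omega : ¬ i = 0)]
        norm_num)]
    exact Finset.sum_nbij' (i := fun i => n - i) (j := fun t => n - t)
      (fun a ha => by simp only [Finset.mem_Ico] at ha ⊢; omega)
      (fun a ha => by simp only [Finset.mem_Ico] at ha ⊢; omega)
      (fun a ha => by simp only [Finset.mem_Ico] at ha; show n - (n - a) = a; omega)
      (fun a ha => by simp only [Finset.mem_Ico] at ha; show n - (n - a) = a; omega)
      (fun a ha => rfl)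
  rw [hg0, hgn, hmid]
  have hkey := key (dq - 1) (by linarith) (by linarith) n hn
  rw [show dq - 1 + 1 = dq by ring, show dq - 1 - 1 = dq - 2 by ring] at hkey
  rw [Finset.sum_neg_distrib]
  have hsplit : (1 + (dq-1) ^ ofl n) / dq = 1 / dq + (dq-1) ^ ofl n * dq⁻¹ := by
    field_simp
  linarith [hkey]
end

section
/- Let A be a 2-stochastic (n+1)×(n+1) integer log-matrix (each column has entries summing to 2) whose associated graph G on the n+1 row indices — with one edge (or loop) per column, joining the (at most two) rows with nonzero entries — is a path v₀v₁⋯v_{n−1} with a loop attached at v₀ (so the columns are x₀², x₀x₁, x₁x₂, …, x_{n−1}x_n in monomial terms). Then A restricts to an automorphism of Λ₀, and the inverse degree (1/2 − Σᵢ rᵢ, rᵢ the least entry in row i of A⁻¹) equals n. -/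
namespace Stmt19

open Finset Matrix

lemma sum_ite_pair {R : Type*} [AddCommMonoid R] {α : Type*} [Fintype α] [DecidableEq α]
    (a b : α) (h : a ≠ b) (f : α → R) :
    (∑ k, if k = a ∨ k = b then f k else 0) = f a + f b := by
  have hrw : ∀ k : α, (if k = a ∨ k = b then f k else 0)
      = (if k = a then f k else 0) + (if k = b then f k else 0) := by
    intro k
    by_cases h1 : k = a <;> by_cases h2 : k = b <;> simp_all
  rw [Finset.sum_congr rfl fun k _ => hrw k, Finset.sum_add_distrib,
    Finset.sum_ite_eq' Finset.univ a f, Finset.sum_ite_eq' Finset.univ b f]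
  simp

def Aq (n : ℕ) : Matrix (Fin (n + 1)) (Fin (n + 1)) ℚ :=
  Matrix.of fun i j =>
    if j.val = 0 then (if i.val = 0 then 2 else 0)
    else if i.val = j.val - 1 ∨ i.val = j.val then 1 else 0

def Bq (n : ℕ) : Matrix (Fin (n + 1)) (Fin (n + 1)) ℚ :=
  Matrix.of fun i j =>
    if i.val = 0 then (-1) ^ j.val / 2
    else if i.val ≤ j.val then (-1) ^ (j.val - i.val) else 0

lemma hBA (n : ℕ) : Bq n * Aq n = 1 := by
  ext i j
  rw [Matrix.mul_apply]
  by_cases hj : j.val = 0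
  · have hj0 : j = 0 := Fin.ext hj
    subst hj0
    have hstep : ∀ k : Fin (n + 1),
        Bq n i k * Aq n k 0 = if k = 0 then Bq n i 0 * 2 else 0 := by
      intro k
      by_cases hk : k = 0
      · subst hk; simp [Aq]
      · have hkv : ¬ k.val = 0 := fun h => hk (Fin.ext h)
        simp [Aq, hk, hkv]
    rw [Finset.sum_congr rfl fun k _ => hstep k, Finset.sum_ite_eq' Finset.univ 0]
    simp only [Finset.mem_univ, if_true]
    by_cases hi : i = 0
    · subst hi; simp [Bq, Matrix.one_apply]
    · have hiv : ¬ i.val = 0 := fun h => hi (Fin.ext h)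
      have h2 : ¬ i.val ≤ 0 := by omega
      simp [Bq, hiv, h2, Matrix.one_apply, hi]
  · have hj1 : 1 ≤ j.val := Nat.one_le_iff_ne_zero.mpr hj
    have hjlt : j.val - 1 < n + 1 := by omega
    set a : Fin (n + 1) := ⟨j.val - 1, hjlt⟩ with ha
    have hav : a.val = j.val - 1 := rfl
    have haj : a ≠ j := by
      intro h
      have := congrArg Fin.val h
      rw [hav] at this; omega
    have hstep : ∀ k : Fin (n + 1),
        Bq n i k * Aq n k j = if k = a ∨ k = j then Bq n i k else 0 := by
      intro k
      simp only [Aq, Matrix.of_apply, if_neg hj]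
      by_cases hk : k.val = j.val - 1 ∨ k.val = j.val
      · have hor : k = a ∨ k = j := by
          rcases hk with h | h
          · exact Or.inl (Fin.ext (by rw [hav, h]))
          · exact Or.inr (Fin.ext h)
        rw [if_pos hk, if_pos hor, mul_one]
      · have hor : ¬ (k = a ∨ k = j) := by
          rintro (rfl | rfl)
          · exact hk (Or.inl hav)
          · exact hk (Or.inr rfl)
        rw [if_neg hk, if_neg hor, mul_zero]
    rw [Finset.sum_congr rfl fun k _ => hstep k, sum_ite_pair a j haj]
    simp only [Bq, Matrix.of_apply, hav]
    by_cases hi : i.val = 0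
    · have hij : i ≠ j := by
        intro h; rw [h] at hi; omega
      rw [Matrix.one_apply_ne hij]
      simp only [if_pos hi]
      obtain ⟨m, hm⟩ : ∃ m, j.val = m + 1 := ⟨j.val - 1, by omega⟩
      rw [hm]
      simp [pow_succ]
      ring
    · simp only [if_neg hi]
      rcases lt_trichotomy i.val j.val with h | h | h
      · have h1 : i.val ≤ j.val - 1 := by omega
        have h2 : i.val ≤ j.val := by omega
        have hij : i ≠ j := by intro e; rw [e] at h; omega
        rw [Matrix.one_apply_ne hij, if_pos h1, if_pos h2]
        have he : j.val - i.val = (j.val - 1 - i.val) + 1 := by omega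
        rw [he, pow_succ]
        ring
      · have hij : i = j := Fin.ext h
        have h1 : ¬ i.val ≤ j.val - 1 := by omega
        have h2 : j.val - i.val = 0 := by omega
        rw [if_neg h1, if_pos (le_of_eq h), h2, hij, Matrix.one_apply_eq]
        norm_num
      · have h1 : ¬ i.val ≤ j.val - 1 := by omega
        have h2 : ¬ i.val ≤ j.val := by omega
        have hij : i ≠ j := by intro e; rw [e] at h; omega
        rw [if_neg h1, if_neg h2, Matrix.one_apply_ne hij]
        ring

lemma hAB (n : ℕ) : Aq n * Bq n = 1 := mul_eq_one_comm.mpr (hBA n)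

lemma hInv (n : ℕ) : (Aq n)⁻¹ = Bq n := Matrix.inv_eq_right_inv (hAB n)

end Stmt19

/-- The log-matrix A of φ : (x₀:…:xₙ) ↦ (x₀² : x₀x₁ : x₁x₂ : … : x_{n−1}xₙ)
(whose associated graph is a path with a loop at one end) restricts to an automorphism
of Λ₀, and the inverse degree 1/2 − Σᵢ rᵢ equals n. -/
theorem stmt19 (n : ℕ) (hn : 2 ≤ n)
    (A : Matrix (Fin (n + 1)) (Fin (n + 1)) ℤ)
    (hA : A = Matrix.of fun i j =>
      if j.val = 0 then (if i.val = 0 then 2 else 0)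
      else if i.val = j.val - 1 ∨ i.val = j.val then 1 else 0)
    (r : Fin (n + 1) → ℚ)
    (hr : ∀ i, r i = Finset.univ.inf' Finset.univ_nonempty
      ((A.map ((↑) : ℤ → ℚ))⁻¹ i)) :
    Set.BijOn A.mulVec {v | ∑ i, v i = 0} {v | ∑ i, v i = 0} ∧
      1 / (2 : ℚ) - ∑ i, r i = (n : ℚ) := by
  open Stmt19 in
  have hmap : A.map ((↑) : ℤ → ℚ) = Aq n := by
    subst hA
    ext i j
    simp only [Matrix.map_apply, Matrix.of_apply, Aq]
    split_ifs <;> norm_num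
  -- column sums
  have hcol : ∀ j : Fin (n + 1), (∑ i, A i j) = 2 := by
    intro j
    subst hA
    by_cases hj : j.val = 0
    · have hstep : ∀ i : Fin (n + 1),
          (Matrix.of fun i j =>
            if j.val = 0 then (if i.val = 0 then (2:ℤ) else 0)
            else if i.val = j.val - 1 ∨ i.val = j.val then 1 else 0) i j
          = if i = 0 then 2 else 0 := by
        intro i
        by_cases hi : i = 0
        · subst hi; simp [hj]; exact Fin.ext hj
        · have hiv : ¬ i.val = 0 := fun h => hi (Fin.ext h)
          simp [hj, hi, hiv]
      rw [Finset.sum_congr rfl fun i _ => hstep i, Finset.sum_ite_eq' Finset.univ 0]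
      simp
    · have hj1 : 1 ≤ j.val := Nat.one_le_iff_ne_zero.mpr hj
      have hjlt : j.val - 1 < n + 1 := by omega
      set a : Fin (n + 1) := ⟨j.val - 1, hjlt⟩ with ha
      have hav : a.val = j.val - 1 := rfl
      have haj : a ≠ j := by
        intro h
        have := congrArg Fin.val h
        rw [hav] at this; omega
      have hstep : ∀ i : Fin (n + 1),
          (Matrix.of fun i j =>
            if j.val = 0 then (if i.val = 0 then (2:ℤ) else 0)
            else if i.val = j.val - 1 ∨ i.val = j.val then 1 else 0) i j
          = if i = a ∨ i = j then 1 else 0 := by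
        intro i
        simp only [Matrix.of_apply, if_neg hj]
        by_cases hk : i.val = j.val - 1 ∨ i.val = j.val
        · have hor : i = a ∨ i = j := by
            rcases hk with h | h
            · exact Or.inl (Fin.ext (by rw [hav, h]))
            · exact Or.inr (Fin.ext h)
          rw [if_pos hk, if_pos hor]
        · have hor : ¬ (i = a ∨ i = j) := by
            rintro (rfl | rfl)
            · exact hk (Or.inl hav)
            · exact hk (Or.inr rfl)
          rw [if_neg hk, if_neg hor]
      rw [Finset.sum_congr rfl fun i _ => hstep i,
        Stmt19.sum_ite_pair a j haj (fun _ => (1:ℤ))]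
      norm_num
  have hsum : ∀ v : Fin (n + 1) → ℤ, (∑ i, A.mulVec v i) = 2 * ∑ j, v j := by
    intro v
    simp only [Matrix.mulVec, dotProduct]
    rw [Finset.sum_comm, Finset.mul_sum]
    refine Finset.sum_congr rfl fun j _ => ?_
    rw [← Finset.sum_mul, hcol j]
  -- cast of mulVec
  have hcast : ∀ u : Fin (n + 1) → ℤ,
      (Aq n).mulVec (fun j => ((u j : ℤ) : ℚ)) = fun i => ((A.mulVec u i : ℤ) : ℚ) := by
    intro u
    funext i
    rw [← hmap]
    simp only [Matrix.mulVec, dotProduct, Matrix.map_apply]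
    push_cast
    rfl
  have hinj : Function.Injective A.mulVec := by
    intro u w h
    have h2 : (Aq n).mulVec (fun j => ((u j : ℤ) : ℚ))
        = (Aq n).mulVec (fun j => ((w j : ℤ) : ℚ)) := by
      rw [hcast, hcast, h]
    have h3 : (Bq n).mulVec ((Aq n).mulVec (fun j => ((u j : ℤ) : ℚ)))
        = (Bq n).mulVec ((Aq n).mulVec (fun j => ((w j : ℤ) : ℚ))) := by rw [h2]
    rw [Matrix.mulVec_mulVec, Matrix.mulVec_mulVec, Stmt19.hBA n,
      Matrix.one_mulVec, Matrix.one_mulVec] at h3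
    funext i
    exact Int.cast_injective (congrFun h3 i)
  constructor
  · refine ⟨?_, hinj.injOn, ?_⟩
    · intro v hv
      simp only [Set.mem_setOf_eq] at hv ⊢
      rw [hsum v, hv, mul_zero]
    · intro w hw
      simp only [Set.mem_setOf_eq] at hw
      set v : Fin (n + 1) → ℤ := fun i =>
        if i.val = 0 then -(∑ j ∈ Finset.univ.filter (fun j : Fin (n + 1) => Odd j.val), w j)
        else ∑ j, (if i.val ≤ j.val then (-1 : ℤ) ^ (j.val - i.val) * w j else 0) with hvdef
      have hv : (fun j => ((v j : ℤ) : ℚ)) = (Bq n).mulVec (fun j => ((w j : ℤ) : ℚ)) := by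
        funext i
        simp only [Matrix.mulVec, dotProduct, Bq, Matrix.of_apply, hvdef]
        by_cases h0 : i.val = 0
        · simp only [if_pos h0]
          have hsplit := Finset.sum_filter_add_sum_filter_not Finset.univ
            (fun j : Fin (n + 1) => Odd j.val) (fun j => ((-1 : ℚ)) ^ j.val * (w j : ℚ))
          have h1 : ∑ j ∈ Finset.univ.filter (fun j : Fin (n + 1) => Odd j.val),
              ((-1 : ℚ)) ^ j.val * (w j : ℚ)
              = -∑ j ∈ Finset.univ.filter (fun j : Fin (n + 1) => Odd j.val), (w j : ℚ) := by
            rw [← Finset.sum_neg_distrib]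
            refine Finset.sum_congr rfl fun j hj => ?_
            rw [(Finset.mem_filter.mp hj).2.neg_one_pow]
            ring
          have h2 : ∑ j ∈ Finset.univ.filter (fun j : Fin (n + 1) => ¬ Odd j.val),
              ((-1 : ℚ)) ^ j.val * (w j : ℚ)
              = ∑ j ∈ Finset.univ.filter (fun j : Fin (n + 1) => ¬ Odd j.val), (w j : ℚ) := by
            refine Finset.sum_congr rfl fun j hj => ?_
            rw [(Nat.not_odd_iff_even.mp (Finset.mem_filter.mp hj).2).neg_one_pow]
            ring
          have h3 : (∑ j ∈ Finset.univ.filter (fun j : Fin (n + 1) => Odd j.val), (w j : ℚ))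
              + ∑ j ∈ Finset.univ.filter (fun j : Fin (n + 1) => ¬ Odd j.val), (w j : ℚ) = 0 := by
            rw [Finset.sum_filter_add_sum_filter_not]
            have : ((∑ i, w i : ℤ) : ℚ) = 0 := by rw [hw]; norm_num
            push_cast at this
            exact this
          have h4 : ∑ j, ((-1 : ℚ)) ^ j.val / 2 * (w j : ℚ)
              = (∑ j, ((-1 : ℚ)) ^ j.val * (w j : ℚ)) / 2 := by
            rw [Finset.sum_div]
            exact Finset.sum_congr rfl fun j _ => by ring
          rw [h4]
          push_cast
          rw [h1, h2] at hsplit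
          linarith [hsplit, h3]
        · simp only [if_neg h0]
          push_cast
          refine Finset.sum_congr rfl fun j _ => ?_
          split_ifs <;> push_cast <;> ring
      have hAv : A.mulVec v = w := by
        have h5 : (Aq n).mulVec ((Bq n).mulVec (fun j => ((w j : ℤ) : ℚ)))
            = fun j => ((w j : ℤ) : ℚ) := by
          rw [Matrix.mulVec_mulVec, Stmt19.hAB n, Matrix.one_mulVec]
        rw [← hv, hcast] at h5
        funext i
        exact Int.cast_injective (congrFun h5 i)
      have hvsum : (∑ i, v i) = 0 := by
        have := hsum v
        rw [hAv, hw] at this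
        omega
      exact ⟨v, hvsum, hAv⟩
  · -- the numeric part
    have hrinv : ∀ i, r i = Finset.univ.inf' Finset.univ_nonempty (Bq n i) := by
      intro i
      rw [hr i, hmap, Stmt19.hInv n]
    have hrval : ∀ i : Fin (n + 1),
        r i = if i.val = 0 then (-1/2 : ℚ) else if i.val = n then 0 else -1 := by
      intro i
      rw [hrinv i]
      apply le_antisymm
      · by_cases h0 : i.val = 0
        · rw [if_pos h0]
          have hval : Bq n i ⟨1, by omega⟩ = -1/2 := by
            simp only [Bq, Matrix.of_apply, if_pos h0]
            norm_num
          exact le_trans (Finset.inf'_le (Bq n i) (Finset.mem_univ _)) hval.le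
        · by_cases h1 : i.val = n
          · rw [if_neg h0, if_pos h1]
            have hval : Bq n i 0 = 0 := by
              have hle : ¬ i.val ≤ (0 : Fin (n + 1)).val := by rw [Fin.val_zero]; omega
              simp only [Bq, Matrix.of_apply, if_neg h0, if_neg hle]
            exact le_trans (Finset.inf'_le (Bq n i) (Finset.mem_univ _)) hval.le
          · rw [if_neg h0, if_neg h1]
            have hlt : i.val + 1 < n + 1 := by have := i.isLt; omega
            have hval : Bq n i ⟨i.val + 1, hlt⟩ = -1 := by
              have hle : i.val ≤ (⟨i.val + 1, hlt⟩ : Fin (n + 1)).val := by simp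
              simp only [Bq, Matrix.of_apply, if_neg h0, if_pos hle]
              have he : (⟨i.val + 1, hlt⟩ : Fin (n + 1)).val - i.val = 1 := by simp
              rw [he]; norm_num
            exact le_trans (Finset.inf'_le (Bq n i) (Finset.mem_univ _)) hval.le
      · apply Finset.le_inf'
        intro j _
        simp only [Bq, Matrix.of_apply]
        by_cases h0 : i.val = 0
        · simp only [if_pos h0, h0, if_true]
          rcases Nat.even_or_odd j.val with h | h
          · norm_num [h.neg_one_pow]
          · norm_num [h.neg_one_pow]
        · simp only [if_neg h0, h0, if_false]
          by_cases h1 : i.val = n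
          · simp only [if_pos h1]
            by_cases h2 : i.val ≤ j.val
            · have : j.val - i.val = 0 := by have := j.isLt; omega
              rw [if_pos h2, this]; norm_num
            · rw [if_neg h2]
          · simp only [if_neg h1]
            by_cases h2 : i.val ≤ j.val
            · rw [if_pos h2]
              rcases Nat.even_or_odd (j.val - i.val) with h | h
              · norm_num [h.neg_one_pow]
              · norm_num [h.neg_one_pow]
            · rw [if_neg h2]; norm_num
    have hsum2 : (∑ i, r i) = 1 / 2 - (n : ℚ) := by
      rw [Finset.sum_congr rfl fun i _ => hrval i, Fin.sum_univ_succ]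
      have h0 : ((0 : Fin (n + 1)).val = 0) := rfl
      have hterm : ∀ i : Fin n,
          (if (i.succ : Fin (n + 1)).val = 0 then (-1/2 : ℚ)
            else if (i.succ : Fin (n + 1)).val = n then 0 else -1)
          = -1 + (if i = (⟨n - 1, by omega⟩ : Fin n) then 1 else 0) := by
        intro i
        have hs : (i.succ : Fin (n + 1)).val = i.val + 1 := rfl
        rw [hs]
        have hne : ¬ (i.val + 1 = 0) := by omega
        rw [if_neg hne]
        by_cases h : i.val + 1 = n
        · have : i = (⟨n - 1, by omega⟩ : Fin n) := Fin.ext (by simp; omega)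
          rw [if_pos h, if_pos this]; norm_num
        · have : i ≠ (⟨n - 1, by omega⟩ : Fin n) := by
            intro e
            have := congrArg Fin.val e
            simp at this; omega
          rw [if_neg h, if_neg this]; norm_num
      rw [Finset.sum_congr rfl fun i _ => hterm i, Finset.sum_add_distrib,
        Finset.sum_ite_eq' Finset.univ (⟨n - 1, by omega⟩ : Fin n) (fun _ => (1:ℚ))]
      simp only [h0, if_pos rfl, Finset.sum_const, Finset.card_univ, Fintype.card_fin,
        Finset.mem_univ, if_true, nsmul_eq_mul]
      have hn1 : (1 : ℚ) ≤ n := by exact_mod_cast Nat.one_le_of_lt hn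
      field_simp
      ring
    rw [hsum2]
    ring
end
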